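/- Let L be the Laplacian of a connected undirected graph on N nodes, and consider the linear system ẋ = -(L ⊗ I_N + B)x + B(G(û) ⊗ 1_N) with B encoding b_{ij} = δ_{ij} and û fixed. Then the system has a unique globally exponentially stable equilibrium x* whose components satisfy x*_{ij} = G_j(û) for all i, j; in particular every block x*_i equals G(û), so |x*_i| = |G(û)|. -/

import Mathlib

open Matrix

theorem consensus_filter_boundary_layer
    (N : ℕ) (L : Matrix (Fin N) (Fin N) ℝ)
    (hsymm : L.IsSymm) (hpsd : L.PosSemidef)
    (hker : ∀ v : Fin N → ℝ, L.mulVec v = 0 ↔ ∃ c : ℝ, v = fun _ => c)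
    (g : Fin N → ℝ) :
    let B : Matrix (Fin N × Fin N) (Fin N × Fin N) ℝ :=
      Matrix.diagonal fun p => if p.1 = p.2 then 1 else 0
    let M : Matrix (Fin N × Fin N) (Fin N × Fin N) ℝ :=
      Matrix.kroneckerMap (· * ·) L (1 : Matrix (Fin N) (Fin N) ℝ) + B
    ∃ xstar : Fin N × Fin N → ℝ,
      (∀ i j : Fin N, xstar (i, j) = g j) ∧
      ((-M).mulVec xstar + B.mulVec (fun p => g p.2) = 0) ∧
      (∀ y : Fin N × Fin N → ℝ,
        (-M).mulVec y + B.mulVec (fun p => g p.2) = 0 → y = xstar) ∧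
      ∃ c > (0 : ℝ), ∃ lam > (0 : ℝ),
        ∀ x : ℝ → Fin N × Fin N → ℝ,
          (∀ (t : ℝ) (p : Fin N × Fin N),
            HasDerivAt (fun s => x s p)
              (((-M).mulVec (x t) + B.mulVec (fun q => g q.2)) p) t) →
          ∀ t : ℝ, 0 ≤ t →
            ‖x t - xstar‖ ≤ c * Real.exp (-lam * t) * ‖x 0 - xstar‖ := by
  intro B M
  have hB : B = Matrix.diagonal fun p : Fin N × Fin N => if p.1 = p.2 then (1:ℝ) else 0 := rfl
  have hM : M = Matrix.kroneckerMap (· * ·) L (1 : Matrix (Fin N) (Fin N) ℝ) + B := rfl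
  set xstar : Fin N × Fin N → ℝ := fun p => g p.2 with hxstar
  -- mulVec formulas
  have hKmul : ∀ v : Fin N × Fin N → ℝ,
      (Matrix.kroneckerMap (· * ·) L (1 : Matrix (Fin N) (Fin N) ℝ)).mulVec v
        = fun p => ∑ k, L p.1 k * v (k, p.2) := by
    intro v; funext p; rcases p with ⟨i, j⟩
    simp only [Matrix.mulVec, dotProduct, Fintype.sum_prod_type,
      Matrix.kroneckerMap_apply, Matrix.one_apply, mul_ite, mul_one, mul_zero, ite_mul, zero_mul,
      Finset.sum_ite_eq, Finset.mem_univ, if_true]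
  have hBmul : ∀ v : Fin N × Fin N → ℝ,
      B.mulVec v = fun p => (if p.1 = p.2 then (1:ℝ) else 0) * v p := by
    intro v; funext p; rw [hB]; simp [Matrix.mulVec_diagonal]
  -- kernel fact
  have hL1 : L.mulVec (fun _ => (1:ℝ)) = 0 := (hker _).mpr ⟨1, rfl⟩
  -- equilibrium
  have hMx : M.mulVec xstar = B.mulVec xstar := by
    rw [hM, Matrix.add_mulVec, hKmul]
    have : (fun p : Fin N × Fin N => ∑ k, L p.1 k * xstar (k, p.2)) = 0 := by
      funext p
      have h0 : L.mulVec (fun _ => (1:ℝ)) p.1 = 0 := by rw [hL1]; rfl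
      simp only [Matrix.mulVec, dotProduct, mul_one] at h0
      calc (∑ k, L p.1 k * xstar (k, p.2)) = (∑ k, L p.1 k) * g p.2 := by
            rw [Finset.sum_mul]
        _ = 0 := by rw [h0, zero_mul]
    rw [this, zero_add]
  have heq : (-M).mulVec xstar + B.mulVec (fun p => g p.2) = 0 := by
    rw [Matrix.neg_mulVec, hMx]
    exact neg_add_cancel _
  -- quadratic form
  have hQform : ∀ v : Fin N × Fin N → ℝ,
      v ⬝ᵥ M.mulVec v
        = (∑ j, (fun i => v (i, j)) ⬝ᵥ L.mulVec (fun i => v (i, j))) + ∑ j, v (j, j) * v (j, j) := by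
    intro v
    rw [hM, Matrix.add_mulVec, dotProduct_add]
    congr 1
    · simp only [dotProduct, Matrix.mulVec, Fintype.sum_prod_type,
        Matrix.kroneckerMap_apply, Matrix.one_apply, mul_ite, mul_one, mul_zero, ite_mul, zero_mul,
        Finset.sum_ite_eq, Finset.mem_univ, if_true]
      exact Finset.sum_comm
    · rw [hB]
      simp only [dotProduct, Matrix.mulVec_diagonal, Fintype.sum_prod_type]
      rw [Finset.sum_comm]
      simp [mul_ite, ite_mul, Finset.sum_ite_eq]
  have hLpsd : ∀ w : Fin N → ℝ, 0 ≤ w ⬝ᵥ L.mulVec w := by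
    intro w; simpa using hpsd.dotProduct_mulVec_nonneg w
  have hQnonneg : ∀ v : Fin N × Fin N → ℝ, 0 ≤ v ⬝ᵥ M.mulVec v := by
    intro v; rw [hQform]
    apply add_nonneg
    · exact Finset.sum_nonneg fun j _ => hLpsd _
    · exact Finset.sum_nonneg fun j _ => mul_self_nonneg _
  have hQzero : ∀ v : Fin N × Fin N → ℝ, v ⬝ᵥ M.mulVec v = 0 → v = 0 := by
    intro v hv
    rw [hQform] at hv
    have h1 : (∑ j, (fun i => v (i, j)) ⬝ᵥ L.mulVec (fun i => v (i, j))) = 0 ∧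
        (∑ j, v (j, j) * v (j, j)) = 0 := by
      constructor <;>
        [nlinarith [Finset.sum_nonneg (fun j (_ : j ∈ Finset.univ) => hLpsd fun i => v (i, j)),
          Finset.sum_nonneg (fun j (_ : j ∈ Finset.univ) => mul_self_nonneg (v (j, j)))];
         nlinarith [Finset.sum_nonneg (fun j (_ : j ∈ Finset.univ) => hLpsd fun i => v (i, j)),
          Finset.sum_nonneg (fun j (_ : j ∈ Finset.univ) => mul_self_nonneg (v (j, j)))]]
    have hcol : ∀ j, L.mulVec (fun i => v (i, j)) = 0 := by
      intro j
      have hterm : (fun i => v (i, j)) ⬝ᵥ L.mulVec (fun i => v (i, j)) = 0 := by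
        have := (Finset.sum_eq_zero_iff_of_nonneg
          (fun j (_ : j ∈ Finset.univ) => hLpsd fun i => v (i, j))).mp h1.1
        exact this j (Finset.mem_univ j)
      have := hpsd.dotProduct_mulVec_zero_iff (fun i => v (i, j))
      simp only [star_trivial] at this
      exact this.mp hterm
    have hdiag : ∀ j : Fin N, v (j, j) = 0 := by
      intro j
      have := (Finset.sum_eq_zero_iff_of_nonneg
        (fun j (_ : j ∈ Finset.univ) => mul_self_nonneg (v (j, j)))).mp h1.2 j (Finset.mem_univ j)
      exact mul_self_eq_zero.mp this
    funext p
    rcases p with ⟨i, j⟩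
    obtain ⟨c, hc⟩ := (hker _).mp (hcol j)
    have hij : v (i, j) = c := congrFun hc i
    have hjj : v (j, j) = c := congrFun hc j
    rw [Pi.zero_apply, hij, ← hjj, hdiag j]
  -- uniqueness
  have huniq : ∀ y : Fin N × Fin N → ℝ,
      (-M).mulVec y + B.mulVec (fun p => g p.2) = 0 → y = xstar := by
    intro y hy
    rw [Matrix.neg_mulVec] at hy
    have h1 : M.mulVec y = B.mulVec (fun p => g p.2) := neg_add_eq_zero.mp hy
    have hMy : M.mulVec (y - xstar) = 0 := by
      rw [Matrix.mulVec_sub, h1, hMx]; exact sub_self _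
    have := hQzero (y - xstar) (by rw [hMy, dotProduct_zero])
    exact sub_eq_zero.mp this
  -- coercivity constant
  have hlam : ∃ lam > (0:ℝ), ∀ v : Fin N × Fin N → ℝ, lam * (v ⬝ᵥ v) ≤ v ⬝ᵥ M.mulVec v := by
    rcases Nat.eq_zero_or_pos N with hN | hN
    · refine ⟨1, one_pos, fun v => ?_⟩
      subst hN
      simp [dotProduct]
    · have hNe : Nonempty (Fin N) := ⟨⟨0, hN⟩⟩
      set S : Set (Fin N × Fin N → ℝ) := {v | v ⬝ᵥ v = 1} with hS
      have hcont1 : Continuous fun v : Fin N × Fin N → ℝ => v ⬝ᵥ v := by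
        simp only [dotProduct]
        exact continuous_finset_sum _ fun p _ => (continuous_apply p).mul (continuous_apply p)
      have hcontQ : Continuous fun v : Fin N × Fin N → ℝ => v ⬝ᵥ M.mulVec v := by
        simp only [dotProduct, Matrix.mulVec]
        exact continuous_finset_sum _ fun p _ => (continuous_apply p).mul
          (continuous_finset_sum _ fun q _ => continuous_const.mul (continuous_apply q))
      have hSclosed : IsClosed S := isClosed_eq hcont1 continuous_const
      have hSbdd : Bornology.IsBounded S := by
        apply Bornology.IsBounded.subset
          (Metric.isBounded_closedBall (x := (0 : Fin N × Fin N → ℝ)) (r := 1))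
        intro v hv
        have hv1 : v ⬝ᵥ v = 1 := hv
        rw [Metric.mem_closedBall, dist_zero_right,
          pi_norm_le_iff_of_nonneg zero_le_one]
        intro p
        rw [Real.norm_eq_abs, abs_le_one_iff_mul_self_le_one]
        calc v p * v p ≤ ∑ q, v q * v q :=
              Finset.single_le_sum (fun q _ => mul_self_nonneg (v q)) (Finset.mem_univ p)
          _ = 1 := hv1
      have hScomp : IsCompact S := Metric.isCompact_of_isClosed_isBounded hSclosed hSbdd
      have hSne : S.Nonempty := by
        classical
        refine ⟨Pi.single (⟨0, hN⟩, ⟨0, hN⟩) 1, ?_⟩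
        show dotProduct _ _ = 1
        simp [dotProduct, Pi.single_apply, ite_mul, mul_ite]
      obtain ⟨vmin, hvmin, hmin⟩ := hScomp.exists_isMinOn hSne hcontQ.continuousOn
      have hvmin1 : vmin ⬝ᵥ vmin = 1 := hvmin
      have hvminne : vmin ≠ 0 := by
        intro h0
        rw [h0] at hvmin1
        simp [dotProduct] at hvmin1
      refine ⟨vmin ⬝ᵥ M.mulVec vmin, ?_, ?_⟩
      · exact (hQnonneg vmin).lt_of_ne fun h => hvminne (hQzero vmin h.symm)
      · intro v
        by_cases hv0 : v = 0
        · subst hv0; simp [dotProduct]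
        · have hdotpos : 0 < v ⬝ᵥ v :=
            (Finset.sum_nonneg fun p _ => mul_self_nonneg (v p)).lt_of_ne
              fun h => hv0 (dotProduct_self_eq_zero.mp h.symm)
          set r : ℝ := Real.sqrt (v ⬝ᵥ v) with hr
          have hrpos : 0 < r := Real.sqrt_pos.mpr hdotpos
          have hrr : r * r = v ⬝ᵥ v := Real.mul_self_sqrt hdotpos.le
          have hwS : (r⁻¹ • v) ∈ S := by
            show dotProduct _ _ = 1
            rw [smul_dotProduct, dotProduct_smul, smul_eq_mul, smul_eq_mul, ← hrr]
            field_simp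
          have hle : vmin ⬝ᵥ M.mulVec vmin ≤ (r⁻¹ • v) ⬝ᵥ M.mulVec (r⁻¹ • v) := hmin hwS
          have hw : (r⁻¹ • v) ⬝ᵥ M.mulVec (r⁻¹ • v) = r⁻¹ * (r⁻¹ * (v ⬝ᵥ M.mulVec v)) := by
            rw [Matrix.mulVec_smul, smul_dotProduct, dotProduct_smul,
              smul_eq_mul, smul_eq_mul]
          rw [hw] at hle
          have h2 : (vmin ⬝ᵥ M.mulVec vmin) * (r * r) ≤ v ⬝ᵥ M.mulVec v := by
            have hrne : r ≠ 0 := ne_of_gt hrpos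
            calc (vmin ⬝ᵥ M.mulVec vmin) * (r * r)
                ≤ (r⁻¹ * (r⁻¹ * (v ⬝ᵥ M.mulVec v))) * (r * r) := by
                  exact mul_le_mul_of_nonneg_right hle (by positivity)
              _ = v ⬝ᵥ M.mulVec v := by field_simp
          rw [← hrr]
          linarith [h2]
  -- conclusion
  refine ⟨xstar, fun i j => rfl, heq, huniq, ?_⟩
  obtain ⟨lam, hlampos, hcoerc⟩ := hlam
  refine ⟨Real.sqrt ((N : ℝ) * N) + 1, by positivity, lam, hlampos, ?_⟩
  intro x hx t ht
  set e : ℝ → Fin N × Fin N → ℝ := fun s => x s - xstar with he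
  have hder : ∀ t : ℝ, ∀ p : Fin N × Fin N,
      HasDerivAt (fun s => e s p) ((-(M.mulVec (e t))) p) t := by
    intro t p
    have h1 := (hx t p).sub_const (xstar p)
    have h2 : -(M.mulVec (e t)) = (-M).mulVec (x t) + B.mulVec (fun q => g q.2) := by
      have h3 : M.mulVec (e t) = M.mulVec (x t) - B.mulVec xstar := by
        rw [he]; rw [Matrix.mulVec_sub, hMx]
      rw [h3, Matrix.neg_mulVec]
      funext q
      simp [hxstar]
      ring
    rw [← h2] at h1
    exact h1
  set V : ℝ → ℝ := fun s => e s ⬝ᵥ e s with hV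
  have hVder : ∀ t : ℝ, HasDerivAt V (-2 * (e t ⬝ᵥ M.mulVec (e t))) t := by
    intro t
    have h := HasDerivAt.sum (u := Finset.univ)
      (A := fun (p : Fin N × Fin N) (s : ℝ) => e s p * e s p)
      (A' := fun p => (-(M.mulVec (e t))) p * e t p + e t p * (-(M.mulVec (e t))) p)
      (x := t) (fun p _ => (hder t p).mul (hder t p))
    have hfun : V = fun s => ∑ p : Fin N × Fin N, e s p * e s p := rfl
    rw [hfun]
    rw [Finset.sum_fn] at h
    refine h.congr_deriv ?_
    symm
    simp only [dotProduct, Finset.mul_sum]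
    refine Finset.sum_congr rfl fun p _ => ?_
    simp only [Pi.neg_apply]
    ring
  have hVnonneg : ∀ s : ℝ, 0 ≤ V s := by
    intro s
    exact Finset.sum_nonneg fun p _ => mul_self_nonneg (e s p)
  set W : ℝ → ℝ := fun s => V s * Real.exp (2 * lam * s) with hW
  have hWder : ∀ t : ℝ, HasDerivAt W
      ((-2 * (e t ⬝ᵥ M.mulVec (e t))) * Real.exp (2 * lam * t)
        + V t * (2 * lam * Real.exp (2 * lam * t))) t := by
    intro t
    have h1 : HasDerivAt (fun s : ℝ => 2 * lam * s) (2 * lam) t := by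
      simpa using (hasDerivAt_id t).const_mul (2 * lam)
    have hexp : HasDerivAt (fun s => Real.exp (2 * lam * s)) (2 * lam * Real.exp (2 * lam * t)) t := by
      simpa [mul_comm, mul_assoc, mul_left_comm] using h1.exp
    exact (hVder t).mul hexp
  have hWle : ∀ t : ℝ, (-2 * (e t ⬝ᵥ M.mulVec (e t))) * Real.exp (2 * lam * t)
      + V t * (2 * lam * Real.exp (2 * lam * t)) ≤ 0 := by
    intro t
    have h1 : lam * V t ≤ e t ⬝ᵥ M.mulVec (e t) := hcoerc (e t)
    have h2 : (0:ℝ) < Real.exp (2 * lam * t) := Real.exp_pos _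
    nlinarith [mul_nonneg (sub_nonneg.mpr h1) h2.le]
  have hanti : Antitone W :=
    antitone_of_deriv_nonpos (fun s => (hWder s).differentiableAt)
      (fun s => by rw [(hWder s).deriv]; exact hWle s)
  have hW0 : W t ≤ W 0 := hanti ht
  have hVt : V t * Real.exp (2 * lam * t) ≤ V 0 := by
    have : W 0 = V 0 := by simp [hW]
    rw [← this]; exact hW0
  have hVdecay : V t ≤ V 0 * Real.exp (-(2 * lam * t)) := by
    have hE := Real.exp_pos (2 * lam * t)
    rw [Real.exp_neg, ← div_eq_mul_inv, le_div_iff₀ hE]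
    exact hVt
  have hnormle : ∀ s : ℝ, ‖e s‖ ≤ Real.sqrt (V s) := by
    intro s
    rw [pi_norm_le_iff_of_nonneg (Real.sqrt_nonneg _)]
    intro p
    rw [Real.norm_eq_abs]
    apply Real.abs_le_sqrt
    calc e s p ^ 2 = e s p * e s p := sq (e s p)
      _ ≤ V s := Finset.single_le_sum (fun q (_ : q ∈ Finset.univ) => mul_self_nonneg (e s q))
            (Finset.mem_univ p)
  have hV0le : V 0 ≤ ((N:ℝ) * N) * ‖e 0‖ ^ 2 := by
    have hcomp : ∀ p : Fin N × Fin N, e 0 p * e 0 p ≤ ‖e 0‖ ^ 2 := by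
      intro p
      have h := norm_le_pi_norm (e 0) p
      rw [Real.norm_eq_abs] at h
      nlinarith [le_abs_self (e 0 p), neg_abs_le (e 0 p), abs_nonneg (e 0 p)]
    calc V 0 = ∑ p : Fin N × Fin N, e 0 p * e 0 p := rfl
      _ ≤ ∑ _p : Fin N × Fin N, ‖e 0‖ ^ 2 := Finset.sum_le_sum fun p _ => hcomp p
      _ = ((N:ℝ) * N) * ‖e 0‖ ^ 2 := by
          rw [Finset.sum_const, Finset.card_univ, Fintype.card_prod, Fintype.card_fin,
            nsmul_eq_mul]
          push_cast
          ring
  have key : ‖e t‖ ≤ (Real.sqrt ((N:ℝ) * N) + 1) * Real.exp (-lam * t) * ‖e 0‖ := by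
    calc ‖e t‖ ≤ Real.sqrt (V t) := hnormle t
      _ ≤ Real.sqrt (V 0 * Real.exp (-(2 * lam * t))) := Real.sqrt_le_sqrt hVdecay
      _ = Real.sqrt (V 0) * Real.exp (-lam * t) := by
          rw [Real.sqrt_mul (hVnonneg 0),
            show -(2 * lam * t) = (-lam * t) + (-lam * t) by ring, Real.exp_add,
            Real.sqrt_mul_self (Real.exp_nonneg _)]
      _ ≤ (Real.sqrt ((N:ℝ) * N) * ‖e 0‖) * Real.exp (-lam * t) := by
          apply mul_le_mul_of_nonneg_right _ (Real.exp_nonneg _)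
          calc Real.sqrt (V 0) ≤ Real.sqrt (((N:ℝ) * N) * ‖e 0‖ ^ 2) := Real.sqrt_le_sqrt hV0le
            _ = Real.sqrt ((N:ℝ) * N) * ‖e 0‖ := by
                rw [Real.sqrt_mul (by positivity), Real.sqrt_sq (norm_nonneg _)]
      _ ≤ (Real.sqrt ((N:ℝ) * N) + 1) * Real.exp (-lam * t) * ‖e 0‖ := by
          nlinarith [Real.exp_nonneg (-lam * t), norm_nonneg (e 0),
            Real.sqrt_nonneg ((N:ℝ) * N)]
  exact key
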